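/- arXiv:math/9406230 — 3 statements merged into one kernel-verified Lean document; each statement's English description precedes it below -/
import Mathlib

section
/- For every integer n ≥ 2 and every integer k ≥ 1, the necklace sum ∑_{d | k} μ(k/d) · n^d is strictly positive, where μ denotes the Möbius function. -/
open ArithmeticFunction Finset

lemma moebius_bounds (m : ℕ) : -1 ≤ (moebius m : ℤ) ∧ (moebius m : ℤ) ≤ 1 := by
  by_cases h : Squarefree m
  · rw [moebius_apply_of_squarefree h]
    constructor <;> rcases Nat.even_or_odd (cardFactors m) with h2 | h2 <;>
      simp [h2, Even.neg_one_pow, Odd.neg_one_pow]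
  · rw [moebius_eq_zero_of_not_squarefree h]; norm_num

theorem necklace_sum_pos (n k : ℕ) (hn : 2 ≤ n) (hk : 1 ≤ k) :
    0 < ∑ d ∈ k.divisors, (moebius (k / d)) * (n : ℤ) ^ d := by
  have hk0 : k ≠ 0 := by omega
  have hks : k ∈ k.divisors := Nat.mem_divisors_self k hk0
  rw [← Finset.add_sum_erase _ _ hks, Nat.div_self (by omega), moebius_apply_one]
  have hn2 : (2:ℤ) ≤ (n:ℤ) := by exact_mod_cast hn
  have hn1 : (1:ℤ) ≤ (n:ℤ) - 1 := by linarith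
  have h1 : -(∑ d ∈ (k.divisors).erase k, (n:ℤ) ^ d) ≤
      ∑ d ∈ (k.divisors).erase k, (moebius (k / d) : ℤ) * (n:ℤ) ^ d := by
    rw [← Finset.sum_neg_distrib]
    apply Finset.sum_le_sum
    intro i hi
    have hb := (moebius_bounds (k / i)).1
    have hp : (0:ℤ) ≤ (n:ℤ) ^ i := by positivity
    nlinarith
  have h2 : ∑ d ∈ (k.divisors).erase k, (n:ℤ) ^ d ≤ ∑ d ∈ Finset.range k, (n:ℤ) ^ d := by
    apply Finset.sum_le_sum_of_subset_of_nonneg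
    · intro d hd
      rw [Finset.mem_erase, Nat.mem_divisors] at hd
      have : d ≤ k := Nat.le_of_dvd (by omega) hd.2.1
      exact Finset.mem_range.2 (by omega)
    · intros; positivity
  have h3 : ∑ d ∈ Finset.range k, (n:ℤ) ^ d ≤ (n:ℤ) ^ k - 1 := by
    have hg := geom_sum_mul (n:ℤ) k
    have hpos : (0:ℤ) ≤ ∑ d ∈ Finset.range k, (n:ℤ) ^ d := by
      apply Finset.sum_nonneg; intros; positivity
    nlinarith
  have hnk : (1:ℤ) ≤ (n:ℤ) ^ k := one_le_pow₀ (by exact_mod_cast by omega)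
  nlinarith [h1, h2, h3]
end

section
/- For every integer n ≥ 1 and every integer k ≥ 1, k divides ∑_{d | k} μ(k/d) · n^d (Gauss's necklace congruence). -/
open ArithmeticFunction Finset

-- Fermat: p ∣ x^p - x
lemma fermat_int (p : ℕ) (hp : p.Prime) (x : ℤ) : (p : ℤ) ∣ x ^ p - x := by
  haveI : Fact p.Prime := ⟨hp⟩
  have : ((x ^ p - x : ℤ) : ZMod p) = 0 := by
    push_cast
    rw [ZMod.pow_card]
    ring
  exact (ZMod.intCast_zmod_eq_zero_iff_dvd _ p).mp this

lemma prime_pow_dvd (p : ℕ) (hp : p.Prime) (a : ℕ) (ha : 1 ≤ a) (x : ℤ) :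
    ((p : ℤ) ^ a) ∣ x ^ p ^ a - x ^ p ^ (a - 1) := by
  obtain ⟨b, rfl⟩ : ∃ b, a = b + 1 := ⟨a - 1, (Nat.succ_pred_eq_of_pos ha).symm⟩
  simpa [pow_succ, pow_mul, ← pow_mul, mul_comm] using
    dvd_sub_pow_of_dvd_sub (fermat_int p hp x) b

-- double sum over divisors of coprime product
lemma sum_divisors_coprime_mul {M : Type*} [AddCommMonoid M] {m n : ℕ} (h : m.Coprime n)
    (hm : m ≠ 0) (hn : n ≠ 0) (f : ℕ → M) :
    ∑ d ∈ (m * n).divisors, f d = ∑ a ∈ m.divisors, ∑ b ∈ n.divisors, f (a * b) := by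
  rw [← Finset.sum_product']
  refine Finset.sum_nbij' (fun d => (d.gcd m, d.gcd n)) (fun x => x.1 * x.2) ?_ ?_ ?_ ?_ ?_
  · intro d hd
    rw [Nat.mem_divisors] at hd
    simp only [Finset.mem_product, Nat.mem_divisors]
    exact ⟨⟨Nat.gcd_dvd_right _ _, hm⟩, ⟨Nat.gcd_dvd_right _ _, hn⟩⟩
  · intro x hx
    simp only [Finset.mem_product, Nat.mem_divisors] at hx
    exact Nat.mem_divisors.mpr ⟨mul_dvd_mul hx.1.1 hx.2.1, mul_ne_zero hm hn⟩
  · intro d hd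
    rw [Nat.mem_divisors] at hd
    exact (Nat.gcd_mul_gcd_eq_iff_dvd_mul_of_coprime h).mpr hd.1
  · intro x hx
    simp only [Finset.mem_product, Nat.mem_divisors] at hx
    obtain ⟨⟨ha, _⟩, ⟨hb, _⟩⟩ := hx
    have h1 : (x.1 * x.2).gcd m = x.1 := by
      rw [Nat.Coprime.gcd_mul_right_cancel x.1 ((h.symm.coprime_dvd_left hb))]
      exact Nat.gcd_eq_left ha
    have h2 : (x.1 * x.2).gcd n = x.2 := by
      rw [Nat.Coprime.gcd_mul_left_cancel x.2 (h.coprime_dvd_left ha)]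
      exact Nat.gcd_eq_left hb
    simp [h1, h2]
  · intro d hd
    rw [Nat.mem_divisors] at hd
    simp only
    rw [(Nat.gcd_mul_gcd_eq_iff_dvd_mul_of_coprime h).mpr hd.1]

theorem necklace_congruence (n k : ℕ) (hn : 1 ≤ n) (hk : 1 ≤ k) :
    (k : ℤ) ∣ ∑ d ∈ k.divisors, (moebius (k / d)) * (n : ℤ) ^ d := by
  have hk0 : k ≠ 0 := by omega
  -- reduce to prime powers
  have key : ∀ p ∈ k.primeFactors, ((p : ℤ) ^ (k.factorization p)) ∣
      ∑ d ∈ k.divisors, (moebius (k / d)) * (n : ℤ) ^ d := by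
    intro p hp
    have hpp : p.Prime := Nat.prime_of_mem_primeFactors hp
    set a := k.factorization p with ha
    have ha1 : 1 ≤ a := (Nat.Prime.factorization_pos_of_dvd hpp hk0
      (Nat.dvd_of_mem_primeFactors hp))
    obtain ⟨m, hkm⟩ : p ^ a ∣ k := Nat.ordProj_dvd k p
    have hmeq' : m = k / p ^ a := by
      rw [hkm]; rw [Nat.mul_div_cancel_left _ (pow_pos hpp.pos a)]
    have hcop : (p ^ a).Coprime m := by
      rw [hmeq', ha]
      exact Nat.Coprime.pow_left _ (Nat.coprime_ordCompl hpp hk0)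
    clear_value a
    have hm0 : m ≠ 0 := by rintro rfl; simp [hkm] at hk0
    have hpm : p.Coprime m :=
      Nat.Coprime.coprime_dvd_left (dvd_pow_self p (by omega : a ≠ 0)) hcop
    rw [hkm, sum_divisors_coprime_mul hcop (pow_ne_zero a hpp.ne_zero) hm0, Finset.sum_comm]
    refine Finset.dvd_sum ?_
    intro e he
    have hed : e ∣ m := (Nat.mem_divisors.mp he).1
    rw [Nat.sum_divisors_prime_pow hpp]
    have hstep : ∀ i ∈ Finset.range (a + 1),
        (moebius (p ^ a * m / (p ^ i * e)) : ℤ) * (n : ℤ) ^ (p ^ i * e) =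
        (if i = a then (moebius (m / e) : ℤ) * (n : ℤ) ^ (p ^ a * e) else 0) +
        (if i = a - 1 then -((moebius (m / e) : ℤ) * (n : ℤ) ^ (p ^ (a - 1) * e)) else 0) := by
      intro i hi
      have hile : i ≤ a := by simpa using Nat.lt_succ_iff.mp (Finset.mem_range.mp hi)
      have hdiv : p ^ a * m / (p ^ i * e) = p ^ (a - i) * (m / e) := by
        rw [← Nat.div_mul_div_comm (pow_dvd_pow p hile) hed, Nat.pow_div hile hpp.pos]
      have hcop2 : (p ^ (a - i)).Coprime (m / e) :=
        Nat.Coprime.pow_left _ (hpm.coprime_dvd_right (Nat.div_dvd_of_dvd hed))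
      rw [hdiv, isMultiplicative_moebius.map_mul_of_coprime hcop2]
      rcases eq_or_ne i a with hia | hia
      · have h1 : a - i = 0 := by omega
        have h2 : ¬ (i = a - 1) := by omega
        rw [h1, pow_zero, ArithmeticFunction.moebius_apply_one, if_pos hia, if_neg h2, hia]
        push_cast
        ring
      rcases eq_or_ne i (a - 1) with hia1 | hia1
      · have h1 : a - i = 1 := by omega
        rw [h1, pow_one, moebius_apply_prime hpp, if_neg hia, if_pos hia1, hia1]
        push_cast
        ring
      · have h1 : a - i ≠ 0 := by omega
        rw [moebius_apply_prime_pow hpp h1]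
        have h2 : a - i ≠ 1 := by omega
        simp [h2, hia, hia1]
    rw [Finset.sum_congr rfl hstep, Finset.sum_add_distrib,
      Finset.sum_ite_eq' (Finset.range (a + 1)) a,
      Finset.sum_ite_eq' (Finset.range (a + 1)) (a - 1)]
    have hma : a ∈ Finset.range (a + 1) := Finset.self_mem_range_succ a
    have hma1 : a - 1 ∈ Finset.range (a + 1) := Finset.mem_range.mpr (by omega)
    rw [if_pos hma, if_pos hma1]
    have hdvd := (prime_pow_dvd p hpp a ha1 ((n : ℤ) ^ e)).mul_left
      ((moebius (m / e) : ℤ))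
    convert hdvd using 1
    rw [← pow_mul, ← pow_mul]
    ring_nf
  -- combine prime powers
  have hkprod : (k : ℤ) = ∏ p ∈ k.primeFactors, (p : ℤ) ^ (k.factorization p) := by
    conv_lhs => rw [← Nat.factorization_prod_pow_eq_self hk0]
    rw [Nat.prod_factorization_eq_prod_primeFactors]
    push_cast
    rfl
  rw [hkprod]
  refine Finset.prod_dvd_of_coprime ?_ key
  intro p hp q hq hpq
  have hpp : p.Prime := Nat.prime_of_mem_primeFactors hp
  have hqp : q.Prime := Nat.prime_of_mem_primeFactors hq
  have : Nat.Coprime p q := (Nat.coprime_primes hpp hqp).mpr hpq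
  exact (IsCoprime.pow (Nat.isCoprime_iff_coprime.mpr this))
end

section
/- Define N(n,k) := (1/k) · ∑_{d | k} μ(k/d) · n^d for integers n ≥ 2 and k ≥ 1. Then N(n,k) < 2 if and only if n = 2 and k = 2. -/
open ArithmeticFunction Finset

/-- `N n k = (1/k) ∑_{d ∣ k} μ(k/d) n^d`. -/
def necklaceCount (n k : ℕ) : ℤ :=
  (∑ d ∈ k.divisors, (moebius (k / d)) * (n : ℤ) ^ d) / k

private lemma geom_bound (x : ℤ) (hx : 2 ≤ x) (m : ℕ) :
    ∑ d ∈ Icc 1 m, x ^ d ≤ x ^ (m + 1) - x := by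
  induction m with
  | zero => simp
  | succ m ih =>
    rw [Finset.sum_Icc_succ_top (by omega : 1 ≤ m + 1)]
    have hp : (0:ℤ) ≤ x ^ (m + 1) := by positivity
    have h2 : x ^ (m + 2) = x * x ^ (m + 1) := by ring
    nlinarith [mul_nonneg (sub_nonneg.2 hx) hp]

private lemma two_pow_bound (k : ℕ) (hk : 4 ≤ k) : 2 * k ≤ 2 ^ (k - 1) + 2 := by
  induction k with
  | zero => omega
  | succ k ih =>
    rcases Nat.lt_or_ge k 4 with h | h
    · interval_cases k <;> norm_num
    · have h1 : 2 ^ (k - 1) ≤ 2 ^ (k + 1 - 1) := Nat.pow_le_pow_right (by norm_num) (by omega)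
      have h2 : 2 ≤ 2 ^ (k - 1) := by
        calc 2 = 2 ^ 1 := rfl
        _ ≤ 2 ^ (k - 1) := Nat.pow_le_pow_right (by norm_num) (by omega)
      have h3 : 2 ^ (k + 1 - 1) = 2 * 2 ^ (k - 1) := by
        rw [← pow_succ']
        congr 1
        omega
      omega

private lemma sum_ge (n k : ℕ) (hn : 2 ≤ n) (hk : 4 ≤ k) :
    2 * (k : ℤ) ≤ ∑ d ∈ k.divisors, (moebius (k / d)) * (n : ℤ) ^ d := by
  set x : ℤ := (n : ℤ) with hxdef
  have hx : (2:ℤ) ≤ x := by rw [hxdef]; exact_mod_cast hn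
  have h1 : ∑ d ∈ k.divisors, (moebius (k / d)) * x ^ d
      = x ^ k + ∑ d ∈ k.properDivisors, (moebius (k / d)) * x ^ d := by
    rw [← Nat.insert_self_properDivisors (by omega : k ≠ 0),
      Finset.sum_insert Nat.self_notMem_properDivisors, Nat.div_self (by omega : 0 < k)]
    simp
  have h2 : -(∑ d ∈ k.properDivisors, x ^ d)
      ≤ ∑ d ∈ k.properDivisors, (moebius (k / d)) * x ^ d := by
    rw [← Finset.sum_neg_distrib]
    apply Finset.sum_le_sum
    intro d hd
    have hμ : -1 ≤ (moebius (k / d) : ℤ) := neg_le_of_abs_le abs_moebius_le_one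
    have hpow : (0:ℤ) ≤ x ^ d := by positivity
    nlinarith
  have h3 : ∑ d ∈ k.properDivisors, x ^ d ≤ ∑ d ∈ Icc 1 (k / 2), x ^ d := by
    apply Finset.sum_le_sum_of_subset_of_nonneg
    · intro d hd
      rw [Nat.mem_properDivisors] at hd
      obtain ⟨⟨c, hc⟩, hlt⟩ := hd
      rw [Finset.mem_Icc]
      have hd0 : d ≠ 0 := by rintro rfl; simp at hc; omega
      have hc2 : 2 ≤ c := by
        rcases Nat.lt_or_ge c 2 with h | h
        · interval_cases c <;> omega
        · exact h
      have hdd : d * 2 ≤ d * c := Nat.mul_le_mul_left d hc2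
      omega
    · intro i _ _; positivity
  have h4 : ∑ d ∈ Icc 1 (k / 2), x ^ d ≤ x ^ (k / 2 + 1) - x := geom_bound x hx _
  have h5 : x ^ (k / 2 + 1) ≤ x ^ (k - 1) :=
    pow_le_pow_right₀ (by linarith) (by omega)
  have h6 : x ^ k = x * x ^ (k - 1) := by
    rw [← pow_succ']
    congr 1
    omega
  have h7 : (0:ℤ) ≤ x ^ (k - 1) := by positivity
  have h8 : (2:ℤ) ^ (k - 1) ≤ x ^ (k - 1) := pow_le_pow_left₀ (by norm_num) hx _
  have h9 : 2 * (k : ℤ) ≤ 2 ^ (k - 1) + 2 := by exact_mod_cast two_pow_bound k hk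
  nlinarith [mul_nonneg (sub_nonneg.2 hx) h7]

private lemma prime_divisors_sum (n p : ℕ) (hp : p.Prime) :
    ∑ d ∈ p.divisors, (moebius (p / d)) * (n : ℤ) ^ d = (n:ℤ) ^ p - n := by
  rw [hp.divisors, Finset.sum_insert (by simp [hp.one_lt.ne])]
  simp [Nat.div_self hp.pos, Nat.div_one, moebius_apply_prime hp]
  ring

theorem necklaceCount_lt_two_iff (n k : ℕ) (hn : 2 ≤ n) (hk : 1 ≤ k) :
    necklaceCount n k < 2 ↔ n = 2 ∧ k = 2 := by
  have hk0 : (0:ℤ) < (k:ℤ) := by exact_mod_cast hk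
  constructor
  · intro h
    by_contra hc
    have hS : 2 * (k:ℤ) ≤ ∑ d ∈ k.divisors, (moebius (k / d)) * (n : ℤ) ^ d := by
      rcases Nat.lt_or_ge k 4 with hk4 | hk4
      · interval_cases k
        · -- k = 1
          have h2 : (2:ℤ) ≤ n := by exact_mod_cast hn
          norm_num [Nat.divisors_one, moebius_apply_one]
          linarith
        · -- k = 2
          have hn3 : 3 ≤ n := by omega
          rw [prime_divisors_sum n 2 Nat.prime_two]
          have : (3:ℤ) ≤ n := by exact_mod_cast hn3
          push_cast
          nlinarith
        · -- k = 3
          rw [prime_divisors_sum n 3 Nat.prime_three]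
          have h2 : (2:ℤ) ≤ n := by exact_mod_cast hn
          push_cast
          have h4 : 4 * (n:ℤ) ≤ (n:ℤ) ^ 3 := by
            nlinarith [mul_nonneg (mul_nonneg (by linarith : (0:ℤ) ≤ (n:ℤ))
              (by linarith : (0:ℤ) ≤ (n:ℤ) - 2)) (by linarith : (0:ℤ) ≤ (n:ℤ) + 2)]
          linarith
      · exact sum_ge n k hn hk4
    have : (2:ℤ) ≤ necklaceCount n k := by
      rw [necklaceCount, Int.le_ediv_iff_mul_le hk0]
      linarith
    linarith
  · rintro ⟨rfl, rfl⟩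
    rw [necklaceCount, prime_divisors_sum 2 2 Nat.prime_two]
    norm_num
end
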